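/- Let β ∈ (0,1), ν ≥ 0, and let r ≥ 1 be an integer. Then for every t ≥ 0, ∫₀ᵗ e^{−νy} y^{βr−1} M^r_{β, βr}(ν^β y^β) dy = e^{−tν} ∑_{m=0}^∞ ν^m t^{βr+m} M^r_{β, βr+m+1}(ν^β t^β). -/

import Mathlib

open scoped BigOperators ENNReal NNReal
open MeasureTheory Real Set Filter intervalIntegral

/-- The generalized (Prabhakar) Mittag-Leffler function
`M^c_{a,b}(z) = ∑_{n=0}^∞ (c)_n z^n / (n! Γ(an+b))`, where `(c)_n = ∏_{i<n} (c+i)`. -/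
noncomputable def prabhakar (a b c : ℝ) (z : ℝ) : ℝ :=
  ∑' n : ℕ, (∏ i ∈ Finset.range n, (c + i)) * z ^ n / (n.factorial * Real.Gamma (a * n + b))

lemma tsum_eq_toReal_tsum_ofReal (u : ℕ → ℝ) (hu : ∀ n, 0 ≤ u n) :
    ∑' n, u n = (∑' n, ENNReal.ofReal (u n)).toReal := by
  by_cases hs : Summable u
  · rw [← ENNReal.ofReal_tsum_of_nonneg hu hs, ENNReal.toReal_ofReal (tsum_nonneg hu)]
  · rw [tsum_eq_zero_of_not_summable hs]
    have htop : ∑' n, ENNReal.ofReal (u n) = ⊤ := by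
      by_contra h
      apply hs
      have h2 := ENNReal.summable_toReal h
      have : (fun n => (ENNReal.ofReal (u n)).toReal) = u := by
        funext n; exact ENNReal.toReal_ofReal (hu n)
      rwa [this] at h2
    simp [htop]

lemma gamma_lower {β : ℝ} (hβ0 : 0 < β) (hβ1 : β ≤ 1) {x : ℝ} (hx : 1 ≤ x) :
    Real.Gamma x * x ^ β / 2 ≤ Real.Gamma (x + β) := by
  have hxpos : (0:ℝ) < x := lt_of_lt_of_le one_pos hx
  have hxβ : (0:ℝ) < x + β := by linarith
  have hΓ1 : 0 < Real.Gamma (x + β) := Real.Gamma_pos_of_pos hxβ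
  have hΓ2 : 0 < Real.Gamma (x + β + 1) := Real.Gamma_pos_of_pos (by linarith)
  have hΓx : 0 < Real.Gamma x := Real.Gamma_pos_of_pos hxpos
  have hΓx1 : 0 < Real.Gamma (x + 1) := Real.Gamma_pos_of_pos (by linarith)
  -- convexity
  have hconv := Real.convexOn_log_Gamma.2 (mem_Ioi.2 hxβ) (mem_Ioi.2 (by linarith : (0:ℝ) < x + β + 1))
    hβ0.le (by linarith : (0:ℝ) ≤ 1 - β) (by ring)
  have harg : β • (x + β) + (1 - β) • (x + β + 1) = x + 1 := by
    simp only [smul_eq_mul]; ring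
  rw [harg] at hconv
  simp only [Function.comp_apply, smul_eq_mul] at hconv
  -- log Γ(x+β+1) = log (x+β) + log Γ(x+β)
  have hadd : Real.Gamma (x + β + 1) = (x + β) * Real.Gamma (x + β) :=
    Real.Gamma_add_one hxβ.ne'
  rw [hadd, Real.log_mul hxβ.ne' hΓ1.ne'] at hconv
  -- so log Γ(x+1) ≤ log Γ(x+β) + (1-β) log (x+β)
  have key : Real.Gamma (x + 1) ≤ Real.Gamma (x + β) * (x + β) ^ (1 - β) := by
    have := Real.exp_le_exp.2 hconv
    rw [Real.exp_log hΓx1] at this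
    calc Real.Gamma (x+1) ≤ Real.exp (β * Real.log (Real.Gamma (x+β))
        + (1-β) * (Real.log (x+β) + Real.log (Real.Gamma (x+β)))) := this
      _ = Real.Gamma (x + β) * (x + β) ^ (1 - β) := by
          rw [Real.rpow_def_of_pos hxβ]
          rw [show β * Real.log (Real.Gamma (x+β)) + (1-β) * (Real.log (x+β) + Real.log (Real.Gamma (x+β)))
            = Real.log (Real.Gamma (x+β)) + Real.log (x+β) * (1-β) by ring]
          rw [Real.exp_add, Real.exp_log hΓ1]
  rw [Real.Gamma_add_one hxpos.ne'] at key
  -- (x+β)^(1-β) ≤ 2 * x^(1-β)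
  have h2 : (x + β) ^ (1 - β) ≤ 2 * x ^ (1-β) := by
    have h1 : (x + β) ^ (1 - β) ≤ (2*x) ^ (1-β) :=
      Real.rpow_le_rpow hxβ.le (by linarith) (by linarith)
    have h2 : ((2:ℝ)*x) ^ (1-β) = 2 ^ (1-β) * x ^ (1-β) :=
      Real.mul_rpow (by norm_num) hxpos.le
    have h3 : (2:ℝ) ^ (1-β) ≤ 2 := by
      calc (2:ℝ) ^ (1-β) ≤ 2 ^ (1:ℝ) := Real.rpow_le_rpow_left_iff (by norm_num) |>.2 (by linarith)
        _ = 2 := Real.rpow_one 2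
    have hx1 : (0:ℝ) ≤ x ^ (1-β) := Real.rpow_nonneg hxpos.le _
    calc (x + β) ^ (1-β) ≤ 2 ^ (1-β) * x ^ (1-β) := by rw [← h2]; exact h1
      _ ≤ 2 * x ^ (1-β) := by nlinarith
  -- combine: x Γ x ≤ Γ(x+β) * 2 * x^{1-β}
  have h4 : x * Real.Gamma x ≤ Real.Gamma (x + β) * (2 * x ^ (1-β)) := by
    calc x * Real.Gamma x ≤ Real.Gamma (x+β) * (x+β)^(1-β) := key
      _ ≤ Real.Gamma (x + β) * (2 * x ^ (1-β)) := by
          exact mul_le_mul_of_nonneg_left h2 hΓ1.le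
  have hxsplit : x ^ (1-β) * x ^ β = x := by
    rw [← Real.rpow_add hxpos]; norm_num
  have hxbpos : 0 < x ^ β := Real.rpow_pos_of_pos hxpos _
  have hx1b : 0 < x ^ (1-β) := Real.rpow_pos_of_pos hxpos _
  rw [div_le_iff₀ (by norm_num : (0:ℝ) < 2)] at *
  nlinarith [mul_le_mul_of_nonneg_right h4 hxbpos.le]

lemma summable_prab {β : ℝ} (hβ : β ∈ Set.Ioo (0:ℝ) 1) (r : ℕ) (hr : 1 ≤ r)
    {b : ℝ} (hb : 0 < b) {z : ℝ} (hz : 0 ≤ z) :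
    Summable (fun n : ℕ =>
      (∏ i ∈ Finset.range n, ((r:ℝ) + i)) * z ^ n / (n.factorial * Real.Gamma (β * n + b))) := by
  set f : ℕ → ℝ := fun n =>
    (∏ i ∈ Finset.range n, ((r:ℝ) + i)) * z ^ n / (n.factorial * Real.Gamma (β * n + b)) with hf
  have hP : ∀ n : ℕ, 0 < ∏ i ∈ Finset.range n, ((r:ℝ) + i) := by
    intro n
    apply Finset.prod_pos
    intro i _
    have : (1:ℝ) ≤ (r:ℝ) := by exact_mod_cast hr
    positivity
  have hΓpos : ∀ n : ℕ, 0 < Real.Gamma (β * n + b) := by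
    intro n
    apply Real.Gamma_pos_of_pos
    have : (0:ℝ) ≤ β * n := mul_nonneg hβ.1.le (Nat.cast_nonneg _)
    linarith
  have hfnn : ∀ n, 0 ≤ f n := by
    intro n
    apply div_nonneg (mul_nonneg (hP n).le (pow_nonneg hz n))
    exact mul_nonneg (Nat.cast_nonneg _) (hΓpos n).le
  refine summable_of_ratio_norm_eventually_le (r := 1/2) (by norm_num) ?_
  -- eventual bound on β n + b
  have htend : Tendsto (fun n : ℕ => β * (n:ℝ) + b) atTop atTop := by
    apply Filter.tendsto_atTop_add_const_right
    exact (tendsto_natCast_atTop_atTop (R := ℝ)).const_mul_atTop hβ.1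
  have hev2 : ∀ᶠ x : ℝ in atTop, 4 * r * z ≤ x ^ β :=
    (tendsto_rpow_atTop hβ.1).eventually_ge_atTop _
  filter_upwards [htend.eventually_ge_atTop 1, htend.eventually hev2] with n hx1 hx2
  set x : ℝ := β * n + b with hxdef
  have hxpos : 0 < x := lt_of_lt_of_le one_pos hx1
  have hΓx : 0 < Real.Gamma x := Real.Gamma_pos_of_pos hxpos
  have hΓxβ : 0 < Real.Gamma (x + β) := Real.Gamma_pos_of_pos (by linarith [hβ.1])
  have hglow := gamma_lower hβ.1 hβ.2.le hx1
  have hxb : 0 < x ^ β := Real.rpow_pos_of_pos hxpos _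
  -- rewrite f (n+1)
  have harg : β * ((n:ℕ)+1 : ℕ) + b = x + β := by push_cast; ring
  have hfn1 : f (n+1) = f n * (((r:ℝ) + n) * z * Real.Gamma x / ((n + 1) * Real.Gamma (x+β))) := by
    rw [hf]
    simp only []
    rw [harg, Finset.prod_range_succ]
    rw [Nat.factorial_succ]
    push_cast
    rw [← hxdef]
    have hΓx' := hΓx.ne'
    have hΓxβ' := hΓxβ.ne'
    field_simp
    ring
  have hq : ((r:ℝ) + n) * z * Real.Gamma x / ((n + 1) * Real.Gamma (x+β)) ≤ 1/2 := by
    rw [div_le_iff₀ (by positivity)]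
    have hrn : ((r:ℝ) + n) ≤ (r:ℝ) * (n+1) := by
      have h1 : (1:ℝ) ≤ (r:ℝ) := by exact_mod_cast hr
      nlinarith [Nat.cast_nonneg (α := ℝ) n]
    -- Γ(x+β) ≥ Γ x * x^β / 2 ≥ Γ x * (4 r z)/2 = 2 r z Γ x
    have h5 : 2 * ((r:ℝ) * z) * Real.Gamma x ≤ Real.Gamma (x + β) := by
      nlinarith [mul_le_mul_of_nonneg_left hx2 hΓx.le]
    nlinarith [mul_le_mul_of_nonneg_right hrn (mul_nonneg hz hΓx.le),
      mul_le_mul_of_nonneg_left h5 (by positivity : (0:ℝ) ≤ (r:ℝ) * ((n:ℝ)+1) * z * Real.Gamma x)]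
  rw [hfn1]
  rw [Real.norm_eq_abs, Real.norm_eq_abs, abs_of_nonneg (hfnn n),
    abs_of_nonneg (mul_nonneg (hfnn n) (by positivity))]
  calc f n * (((r:ℝ) + n) * z * Real.Gamma x / ((n + 1) * Real.Gamma (x+β)))
      ≤ f n * (1/2) := mul_le_mul_of_nonneg_left hq (hfnn n)
    _ = 1/2 * f n := by ring

lemma intInt_beta (m : ℕ) {c : ℝ} (hc : 0 < c) (t : ℝ) :
    IntervalIntegrable (fun y => (t - y)^m * y^(c-1)) volume 0 t :=
  (intervalIntegrable_rpow' (by linarith)).continuousOn_mul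
    (((continuous_const.sub continuous_id).pow m).continuousOn)

lemma beta_integral_aux (m : ℕ) : ∀ (c : ℝ), 0 < c → ∀ (t : ℝ), 0 ≤ t →
    ∫ y in (0:ℝ)..t, (t - y)^m * y^(c-1)
      = ((m.factorial : ℝ) * Real.Gamma c / Real.Gamma (c + m + 1)) * t^(c+m) := by
  induction m with
  | zero =>
    intro c hc t ht
    simp only [pow_zero, one_mul, Nat.factorial_zero, Nat.cast_one, Nat.cast_zero, add_zero]
    rw [integral_rpow (Or.inl (by linarith : (-1:ℝ) < c - 1))]
    rw [sub_add_cancel, Real.zero_rpow hc.ne', Real.Gamma_add_one hc.ne']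
    field_simp
    ring
  | succ m IH =>
    intro c hc t ht
    have hc1 : (0:ℝ) < c + 1 := by linarith
    -- FTC for F y = (t-y)^(m+1) * y^c
    have hderiv : ∀ y ∈ Ioo (0:ℝ) t,
        HasDerivAt (fun y => (t-y)^(m+1) * y^c)
          (c * ((t-y)^(m+1) * y^(c-1)) - ((m:ℝ)+1) * ((t-y)^m * y^c)) y := by
      intro y hy
      have h1 : HasDerivAt (fun y : ℝ => (t-y)^(m+1)) (((m:ℝ)+1) * (t-y)^m * (-1)) y := by
        have := ((hasDerivAt_id y).const_sub t).fun_pow (m+1)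
        simpa using this
      have h2 : HasDerivAt (fun y : ℝ => y^c) (c * y^(c-1)) y :=
        Real.hasDerivAt_rpow_const (Or.inl hy.1.ne')
      have := h1.fun_mul h2
      exact this.congr_deriv (by ring)
    have hcont : ContinuousOn (fun y : ℝ => (t-y)^(m+1) * y^c) (Icc 0 t) := by
      apply ContinuousOn.mul
      · exact ((continuous_const.sub continuous_id).pow (m+1)).continuousOn
      · intro y _
        exact (Real.continuousAt_rpow_const y c (Or.inr hc.le)).continuousWithinAt
    have hintB : IntervalIntegrable (fun y => (t-y)^m * y^c) volume 0 t := by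
      have := intInt_beta m hc1 t
      simpa using this
    have hintA : IntervalIntegrable (fun y => (t-y)^(m+1) * y^(c-1)) volume 0 t :=
      intInt_beta (m+1) hc t
    have hint : IntervalIntegrable
        (fun y => c * ((t-y)^(m+1) * y^(c-1)) - ((m:ℝ)+1) * ((t-y)^m * y^c)) volume 0 t :=
      (hintA.const_mul c).sub (hintB.const_mul _)
    have hFTC := integral_eq_sub_of_hasDeriv_right_of_le ht hcont
      (fun y hy => (hderiv y hy).hasDerivWithinAt) hint
    have hF0 : (t-(0:ℝ))^(m+1) * (0:ℝ)^c = 0 := by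
      rw [Real.zero_rpow hc.ne', mul_zero]
    have hFt : (t-t)^(m+1) * t^c = 0 := by
      rw [sub_self, zero_pow (Nat.succ_ne_zero m), zero_mul]
    rw [hFt, hF0, sub_zero] at hFTC
    rw [intervalIntegral.integral_sub (hintA.const_mul c) (hintB.const_mul _),
      intervalIntegral.integral_const_mul, intervalIntegral.integral_const_mul] at hFTC
    -- so c * I_A = (m+1) * I_B
    have hIB : ∫ y in (0:ℝ)..t, (t-y)^m * y^c
        = ((m.factorial : ℝ) * Real.Gamma (c+1) / Real.Gamma (c + 1 + m + 1)) * t^(c+1+m) := by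
      have := IH (c+1) hc1 t ht
      simpa using this
    have hIA : ∫ y in (0:ℝ)..t, (t-y)^(m+1) * y^(c-1)
        = (((m:ℝ)+1) * ∫ y in (0:ℝ)..t, (t-y)^m * y^c) / c := by
      field_simp
      linarith [hFTC]
    rw [hIA, hIB, Real.Gamma_add_one hc.ne']
    have hΓ : Real.Gamma (c + 1 + m + 1) = Real.Gamma (c + (m+1 : ℕ) + 1) := by
      push_cast; ring_nf
    have ht' : t^(c+1+m) = t^(c+((m:ℝ)+1)) := by ring_nf
    rw [hΓ, ht'] at *
    push_cast
    field_simp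
    rw [Nat.factorial_succ]
    push_cast
    ring

lemma lint_exp_rpow {ν : ℝ} (hν : 0 ≤ ν) {c : ℝ} (hc : 0 < c) {t : ℝ} (ht : 0 < t) :
    ∫⁻ y in Ioc (0:ℝ) t, ENNReal.ofReal (Real.exp (-(ν*y)) * y^(c-1)) =
    ∑' m : ℕ, ENNReal.ofReal
      (Real.exp (-(t*ν)) * ν^m * (t^(c+(m:ℝ)) * Real.Gamma c / Real.Gamma (c+(m:ℝ)+1))) := by
  have hexp : ∀ z : ℝ, Real.exp z = ∑' m : ℕ, z^m / m.factorial := by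
    intro z
    rw [Real.exp_eq_exp_ℝ, NormedSpace.exp_eq_tsum_div]
  set u : ℕ → ℝ → ℝ := fun m y => (Real.exp (-(t*ν)) * ν^m / m.factorial) * ((t-y)^m * y^(c-1))
    with hu
  have hpt : ∀ y ∈ Ioc (0:ℝ) t,
      ENNReal.ofReal (Real.exp (-(ν*y)) * y^(c-1)) = ∑' m : ℕ, ENNReal.ofReal (u m y) := by
    intro y hy
    have hty : (0:ℝ) ≤ t - y := by linarith [hy.2]
    have hsum0 : Summable (fun m : ℕ => (ν*(t-y))^m / m.factorial) :=
      Real.summable_pow_div_factorial _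
    have hre : Real.exp (-(ν*y)) * y^(c-1) = ∑' m : ℕ, u m y := by
      have e1 : Real.exp (-(ν*y)) = Real.exp (-(t*ν)) * Real.exp (ν*(t-y)) := by
        rw [← Real.exp_add]; ring_nf
      rw [e1, hexp (ν*(t-y)), ← tsum_mul_left, ← tsum_mul_right]
      apply tsum_congr; intro m
      rw [hu]; simp only [mul_pow]; ring
    rw [hre]
    refine ENNReal.ofReal_tsum_of_nonneg (fun m => ?_) ?_
    · exact mul_nonneg
        (div_nonneg (mul_nonneg (Real.exp_nonneg _) (pow_nonneg hν m)) (Nat.cast_nonneg _))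
        (mul_nonneg (pow_nonneg hty m) (Real.rpow_nonneg hy.1.le _))
    · apply Summable.congr (hsum0.mul_left (Real.exp (-(t*ν)) * y^(c-1)))
      intro m
      rw [hu]; simp only [mul_pow, div_pow]; field_simp
  rw [setLIntegral_congr_fun measurableSet_Ioc hpt]
  have hm : ∀ m : ℕ, Measurable (fun y : ℝ => ENNReal.ofReal (u m y)) := by
    intro m
    apply Measurable.ennreal_ofReal
    exact (((measurable_const.sub measurable_id).pow_const m).mul
      (measurable_id.pow_const (c-1))).const_mul _
  rw [lintegral_tsum (fun m => (hm m).aemeasurable)]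
  apply tsum_congr
  intro m
  have hΓpos : 0 < Real.Gamma (c + m + 1) := Real.Gamma_pos_of_pos (by positivity)
  have hnn : 0 ≤ᵐ[volume.restrict (Ioc (0:ℝ) t)] u m := by
    refine (ae_restrict_iff' measurableSet_Ioc).2 (ae_of_all _ fun y hy => ?_)
    exact mul_nonneg
      (div_nonneg (mul_nonneg (Real.exp_nonneg _) (pow_nonneg hν m)) (Nat.cast_nonneg _))
      (mul_nonneg (pow_nonneg (by linarith [hy.2]) m) (Real.rpow_nonneg hy.1.le _))
  have hInt : IntegrableOn (u m) (Ioc (0:ℝ) t) := ((intInt_beta m hc t).const_mul _).1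
  rw [← MeasureTheory.ofReal_integral_eq_lintegral_ofReal hInt hnn]
  congr 1
  rw [hu]
  simp only []
  rw [MeasureTheory.integral_const_mul]
  rw [← intervalIntegral.integral_of_le ht.le, beta_integral_aux m c hc t ht.le]
  have hfac : ((m.factorial : ℝ)) ≠ 0 := Nat.cast_ne_zero.2 (Nat.factorial_ne_zero m)
  field_simp

/-- The integral identity:
`∫₀ᵗ e^{−νy} y^{βr−1} M^r_{β,βr}(ν^β y^β) dy
  = e^{−tν} ∑_{m=0}^∞ ν^m t^{βr+m} M^r_{β,βr+m+1}(ν^β t^β)`. -/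
theorem integral_tempered_mittagLeffler_series
    (β ν : ℝ) (hβ : β ∈ Set.Ioo (0 : ℝ) 1) (hν : 0 ≤ ν) (r : ℕ) (hr : 1 ≤ r)
    (t : ℝ) (ht : 0 ≤ t) :
    (∫ y in (0 : ℝ)..t,
        Real.exp (-(ν * y)) * y ^ (β * r - 1) * prabhakar β (β * r) r (ν ^ β * y ^ β)) =
      Real.exp (-(t * ν)) *
        ∑' m : ℕ, ν ^ m * t ^ (β * r + m) * prabhakar β (β * r + m + 1) r (ν ^ β * t ^ β) := by
  have hβ0 := hβ.1
  have hβ1 := hβ.2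
  have hr1 : (1:ℝ) ≤ (r:ℝ) := by exact_mod_cast hr
  have hβr : 0 < β * r := by nlinarith
  rcases eq_or_lt_of_le ht with rfl | ht'
  · rw [intervalIntegral.integral_same]
    have hz : ∀ m : ℕ,
        ν ^ m * (0:ℝ) ^ (β * r + m) * prabhakar β (β * r + m + 1) r (ν ^ β * (0:ℝ) ^ β) = 0 := by
      intro m
      rw [Real.zero_rpow (by positivity : β * (r:ℝ) + m ≠ 0)]
      ring
    rw [tsum_congr hz, tsum_zero, mul_zero]
  -- positivity facts
  have hPnn : ∀ n : ℕ, (0:ℝ) ≤ ∏ i ∈ Finset.range n, ((r:ℝ) + i) := by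
    intro n
    apply Finset.prod_nonneg
    intro i _
    positivity
  have hcn : ∀ n : ℕ, 0 < β * n + β * r := by
    intro n
    have : (0:ℝ) ≤ β * n := by positivity
    linarith
  have hbm : ∀ m : ℕ, 0 < β * r + m + 1 := by
    intro m
    have : (0:ℝ) ≤ (m:ℝ) := Nat.cast_nonneg _
    linarith
  have hterm_nonneg : ∀ (b z : ℝ), 0 < b → 0 ≤ z → ∀ n : ℕ,
      0 ≤ (∏ i ∈ Finset.range n, ((r:ℝ) + i)) * z ^ n /
        (n.factorial * Real.Gamma (β * n + b)) := by
    intro b z hb hz n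
    apply div_nonneg (mul_nonneg (hPnn n) (pow_nonneg hz n))
    have : (0:ℝ) ≤ β * n := by positivity
    exact mul_nonneg (Nat.cast_nonneg _) (Real.Gamma_pos_of_pos (by linarith)).le
  have hprab_nonneg : ∀ (b z : ℝ), 0 < b → 0 ≤ z → 0 ≤ prabhakar β b r z := by
    intro b z hb hz
    exact tsum_nonneg (hterm_nonneg b z hb hz)
  have hprab_toReal : ∀ (b z : ℝ), 0 < b → 0 ≤ z → prabhakar β b r z =
      (∑' n : ℕ, ENNReal.ofReal ((∏ i ∈ Finset.range n, ((r:ℝ) + i)) * z ^ n /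
        (n.factorial * Real.Gamma (β * n + b)))).toReal := by
    intro b z hb hz
    exact tsum_eq_toReal_tsum_ofReal _ (hterm_nonneg b z hb hz)
  have hpow : ∀ (y : ℝ), 0 ≤ y → ∀ n : ℕ, (y^β)^n = y^(β*(n:ℝ)) := by
    intro y hy n
    rw [← Real.rpow_natCast (y^β) n, ← Real.rpow_mul hy]
  have hznn : ∀ y : ℝ, 0 ≤ y → (0:ℝ) ≤ ν ^ β * y ^ β := fun y hy =>
    mul_nonneg (Real.rpow_nonneg hν _) (Real.rpow_nonneg hy _)
  set f : ℝ → ℝ := fun y =>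
    Real.exp (-(ν * y)) * y ^ (β * r - 1) * prabhakar β (β * r) r (ν ^ β * y ^ β) with hf
  have hfnn : ∀ y ∈ Ioc (0:ℝ) t, 0 ≤ f y := by
    intro y hy
    exact mul_nonneg (mul_nonneg (Real.exp_nonneg _) (Real.rpow_nonneg hy.1.le _))
      (hprab_nonneg _ _ hβr (hznn y hy.1.le))
  -- measurability of f on the interval
  have hmeas : AEStronglyMeasurable f (volume.restrict (Ioc (0:ℝ) t)) := by
    have hg : Measurable (fun y : ℝ => Real.exp (-(ν * y)) * y ^ (β * r - 1) *
        (∑' n : ℕ, ENNReal.ofReal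
          ((∏ i ∈ Finset.range n, ((r:ℝ) + i)) * (ν ^ β * y ^ β) ^ n /
            (n.factorial * Real.Gamma (β * n + β * r)))).toReal) := by
      apply Measurable.mul
      · exact (Real.measurable_exp.comp ((measurable_id.const_mul ν).neg)).mul
          (measurable_id.pow_const _)
      · apply Measurable.ennreal_toReal
        apply Measurable.ennreal_tsum
        intro n
        apply Measurable.ennreal_ofReal
        exact ((((measurable_id.pow_const β).const_mul (ν^β)).pow_const n).const_mul _).div_const _
    apply hg.aestronglyMeasurable.congr
    refine (ae_restrict_iff' measurableSet_Ioc).2 (ae_of_all _ fun y hy => ?_)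
    rw [hf]
    simp only []
    rw [hprab_toReal _ _ hβr (hznn y hy.1.le)]
  have hLHS : (∫ y in (0:ℝ)..t, f y)
      = (∫⁻ y in Ioc (0:ℝ) t, ENNReal.ofReal (f y)).toReal := by
    rw [intervalIntegral.integral_of_le ht'.le]
    rw [integral_eq_lintegral_of_nonneg_ae
      ((ae_restrict_iff' measurableSet_Ioc).2 (ae_of_all _ hfnn)) hmeas]
  -- series coefficients
  set kn : ℕ → ℝ := fun n => (∏ i ∈ Finset.range n, ((r:ℝ) + i)) * (ν^β)^n /
    (n.factorial * Real.Gamma (β * n + β * r)) with hkn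
  have hknn : ∀ n, 0 ≤ kn n := by
    intro n
    apply div_nonneg (mul_nonneg (hPnn n) (pow_nonneg (Real.rpow_nonneg hν _) n))
    exact mul_nonneg (Nat.cast_nonneg _) (Real.Gamma_pos_of_pos (hcn n)).le
  set K : ℕ → ℝ≥0∞ := fun n => ENNReal.ofReal (kn n) with hK
  -- pointwise expansion of the integrand
  have hptwise : ∀ y ∈ Ioc (0:ℝ) t, ENNReal.ofReal (f y) =
      ∑' n : ℕ, K n * ENNReal.ofReal (Real.exp (-(ν*y)) * y^(β*n + β*r - 1)) := by
    intro y hy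
    have hy0 : (0:ℝ) < y := hy.1
    have hterm_eq : ∀ n : ℕ,
        Real.exp (-(ν * y)) * y ^ (β * r - 1) *
          ((∏ i ∈ Finset.range n, ((r:ℝ) + i)) * (ν ^ β * y ^ β) ^ n /
            (n.factorial * Real.Gamma (β * n + β * r)))
        = kn n * (Real.exp (-(ν*y)) * y^(β*n + β*r - 1)) := by
      intro n
      have h1 : (ν^β * y^β)^n = (ν^β)^n * y^(β*(n:ℝ)) := by
        rw [mul_pow, hpow y hy0.le n]
      have h2 : y^(β*(n:ℝ) + β*(r:ℝ) - 1) = y^(β*(n:ℝ)) * y^(β*(r:ℝ)-1) := by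
        rw [← Real.rpow_add hy0]; ring_nf
      have hΓ := (Real.Gamma_pos_of_pos (hcn n)).ne'
      have hfac : ((n.factorial:ℝ)) ≠ 0 := Nat.cast_ne_zero.2 (Nat.factorial_ne_zero n)
      rw [h1, h2, hkn]
      field_simp
    have hre : f y = ∑' n : ℕ, kn n * (Real.exp (-(ν*y)) * y^(β*n + β*r - 1)) := by
      rw [hf]
      simp only [prabhakar]
      rw [← tsum_mul_left]
      exact tsum_congr hterm_eq
    rw [hre, ENNReal.ofReal_tsum_of_nonneg
      (fun n => mul_nonneg (hknn n) (mul_nonneg (Real.exp_nonneg _) (Real.rpow_nonneg hy0.le _)))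
      (Summable.congr (((summable_prab hβ r hr hβr (hznn y hy0.le)).mul_left
        (Real.exp (-(ν * y)) * y ^ (β * r - 1)))) hterm_eq)]
    exact tsum_congr fun n => ENNReal.ofReal_mul (hknn n)
  -- main computation in ℝ≥0∞
  have hlint : ∫⁻ y in Ioc (0:ℝ) t, ENNReal.ofReal (f y)
      = ∑' m : ℕ, ∑' n : ℕ, K n * ENNReal.ofReal
        (Real.exp (-(t*ν)) * ν^m * (t^((β*n+β*r)+(m:ℝ)) * Real.Gamma (β*n+β*r) /
          Real.Gamma ((β*n+β*r)+(m:ℝ)+1))) := by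
    rw [setLIntegral_congr_fun measurableSet_Ioc hptwise]
    have hmeasE : ∀ n : ℕ, Measurable (fun y : ℝ =>
        ENNReal.ofReal (Real.exp (-(ν*y)) * y^(β*n + β*r - 1))) := by
      intro n
      apply Measurable.ennreal_ofReal
      exact (Real.measurable_exp.comp ((measurable_id.const_mul ν).neg)).mul
        (measurable_id.pow_const _)
    have hmeas2 : ∀ n : ℕ, Measurable (fun y : ℝ =>
        K n * ENNReal.ofReal (Real.exp (-(ν*y)) * y^(β*n + β*r - 1))) := fun n =>
      (hmeasE n).const_mul _
    rw [lintegral_tsum (fun n => (hmeas2 n).aemeasurable)]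
    rw [← ENNReal.tsum_comm]
    apply tsum_congr
    intro n
    rw [lintegral_const_mul _ (hmeasE n)]
    rw [lint_exp_rpow hν (hcn n) ht']
    exact ENNReal.tsum_mul_left.symm
  -- identify with the right-hand side, term by term in m
  have hRHSm : ∀ m : ℕ,
      ENNReal.ofReal (Real.exp (-(t*ν)) *
        (ν^m * t^(β*r+(m:ℝ)) * prabhakar β (β*r+m+1) r (ν^β * t^β)))
      = ∑' n : ℕ, K n * ENNReal.ofReal
        (Real.exp (-(t*ν)) * ν^m * (t^((β*n+β*r)+(m:ℝ)) * Real.Gamma (β*n+β*r) /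
          Real.Gamma ((β*n+β*r)+(m:ℝ)+1))) := by
    intro m
    have hterm2 : ∀ n : ℕ,
        (Real.exp (-(t*ν)) * ν^m * t^(β*r+(m:ℝ))) *
          ((∏ i ∈ Finset.range n, ((r:ℝ) + i)) * (ν ^ β * t ^ β) ^ n /
            (n.factorial * Real.Gamma (β * n + (β * r + m + 1))))
        = kn n * (Real.exp (-(t*ν)) * ν^m * (t^((β*n+β*r)+(m:ℝ)) * Real.Gamma (β*n+β*r) /
            Real.Gamma ((β*n+β*r)+(m:ℝ)+1))) := by
      intro n
      have h1 : (ν^β * t^β)^n = (ν^β)^n * t^(β*(n:ℝ)) := by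
        rw [mul_pow, hpow t ht'.le n]
      have h2 : t^((β*(n:ℝ)+β*(r:ℝ))+(m:ℝ)) = t^(β*(n:ℝ)) * t^(β*(r:ℝ)+(m:ℝ)) := by
        rw [← Real.rpow_add ht']; ring_nf
      have hΓ1 := (Real.Gamma_pos_of_pos (hcn n)).ne'
      have hΓarg : Real.Gamma (β*(n:ℝ) + (β*(r:ℝ)+(m:ℝ)+1))
          = Real.Gamma ((β*(n:ℝ)+β*(r:ℝ))+(m:ℝ)+1) := by ring_nf
      have hΓ2 : Real.Gamma ((β*(n:ℝ)+β*(r:ℝ))+(m:ℝ)+1) ≠ 0 := by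
        refine (Real.Gamma_pos_of_pos ?_).ne'
        have h3 := hcn n
        have : (0:ℝ) ≤ (m:ℝ) := Nat.cast_nonneg _
        linarith
      have hfac : ((n.factorial:ℝ)) ≠ 0 := Nat.cast_ne_zero.2 (Nat.factorial_ne_zero n)
      rw [h1, h2, hΓarg, hkn]
      field_simp
    have hreal : Real.exp (-(t*ν)) *
        (ν^m * t^(β*r+(m:ℝ)) * prabhakar β (β*r+m+1) r (ν^β * t^β))
        = ∑' n : ℕ, kn n * (Real.exp (-(t*ν)) * ν^m * (t^((β*n+β*r)+(m:ℝ)) *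
            Real.Gamma (β*n+β*r) / Real.Gamma ((β*n+β*r)+(m:ℝ)+1))) := by
      simp only [prabhakar]
      rw [show Real.exp (-(t*ν)) * (ν^m * t^(β*(r:ℝ)+(m:ℝ)) *
          ∑' n : ℕ, (∏ i ∈ Finset.range n, ((r:ℝ) + i)) * (ν ^ β * t ^ β) ^ n /
            (n.factorial * Real.Gamma (β * n + (β * r + m + 1))))
        = (Real.exp (-(t*ν)) * ν^m * t^(β*(r:ℝ)+(m:ℝ))) *
          ∑' n : ℕ, (∏ i ∈ Finset.range n, ((r:ℝ) + i)) * (ν ^ β * t ^ β) ^ n /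
            (n.factorial * Real.Gamma (β * n + (β * r + m + 1))) from by ring]
      rw [← tsum_mul_left]
      exact tsum_congr hterm2
    rw [hreal, ENNReal.ofReal_tsum_of_nonneg
      (fun n => mul_nonneg (hknn n) (by positivity))
      (Summable.congr ((summable_prab hβ r hr (hbm m) (hznn t ht'.le)).mul_left
        (Real.exp (-(t*ν)) * ν^m * t^(β*r+(m:ℝ)))) hterm2)]
    exact tsum_congr fun n => ENNReal.ofReal_mul (hknn n)
  -- conclude
  have hfinal : ∫⁻ y in Ioc (0:ℝ) t, ENNReal.ofReal (f y)
      = ∑' m : ℕ, ENNReal.ofReal (Real.exp (-(t*ν)) *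
          (ν^m * t^(β*r+(m:ℝ)) * prabhakar β (β*r+m+1) r (ν^β * t^β))) := by
    rw [hlint]
    exact (tsum_congr hRHSm).symm
  rw [hLHS, hfinal]
  rw [← tsum_eq_toReal_tsum_ofReal _ (fun m => mul_nonneg (Real.exp_nonneg _)
    (mul_nonneg (mul_nonneg (pow_nonneg hν m) (Real.rpow_nonneg ht'.le _))
      (hprab_nonneg _ _ (hbm m) (hznn t ht'.le))))]
  exact tsum_mul_left
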